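/- Fix real numbers α, η, β with 1 < α < η < β, and real numbers N > 0, A > 0, B > 0. If c ≥ 0 then φ_c has exactly one critical point t⁻ ∈ (0,∞); moreover φ_c″(t⁻) < 0 and t⁻ is a strict global maximizer of φ_c on (0,∞). -/

import Mathlib

open Real Set Filter Topology

/-- The fibering map `φ_c(t) = ((t^η/η)N − (t^β/β)B − c)/((t^α/α)A)` on `(0,∞)`. -/
noncomputable def fib (α η β N A B c : ℝ) : ℝ → ℝ :=
  fun t => ((t ^ η / η) * N - (t ^ β / β) * B - c) / ((t ^ α / α) * A)

private lemma hd_rpow {t : ℝ} (ht : 0 < t) (p : ℝ) :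
    HasDerivAt (fun x : ℝ => x ^ p) (p * t ^ (p - 1)) t :=
  Real.hasDerivAt_rpow_const (Or.inl ht.ne')

private lemma rpow_split {t : ℝ} (ht : 0 < t) (p q : ℝ) :
    t ^ (p + q) = t ^ p * t ^ q :=
  Real.rpow_add ht p q

set_option maxHeartbeats 1000000 in
/-- For `N > 0`, `A > 0`, `B > 0` and `c ≥ 0`, the fibering map `φ_c`
has a unique critical point `t⁻ > 0`, which satisfies `φ_c″(t⁻) < 0` and is a
strict global maximizer of `φ_c` on `(0,∞)`. -/
theorem stmt6 (α η β N A B : ℝ) (h1 : 1 < α) (h2 : α < η) (h3 : η < β)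
    (hN : 0 < N) (hA : 0 < A) (hB : 0 < B) (c : ℝ) (hc : 0 ≤ c) :
    ∃ tm : ℝ, 0 < tm ∧ deriv (fib α η β N A B c) tm = 0 ∧
      (∀ t : ℝ, 0 < t → deriv (fib α η β N A B c) t = 0 → t = tm) ∧
      deriv (deriv (fib α η β N A B c)) tm < 0 ∧
      ∀ s : ℝ, 0 < s → s ≠ tm → fib α η β N A B c s < fib α η β N A B c tm := by
  have hα0 : (0:ℝ) < α := lt_trans one_pos h1
  have hη0 : (0:ℝ) < η := lt_trans hα0 h2
  have hβ0 : (0:ℝ) < β := lt_trans hη0 h3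
  set a : ℝ := N * (η - α) / η with ha_def
  set b : ℝ := B * (β - α) / β with hb_def
  have ha : 0 < a := div_pos (mul_pos hN (sub_pos.2 h2)) hη0
  have hb : 0 < b := div_pos (mul_pos hB (sub_pos.2 (lt_trans h2 h3))) hβ0
  set K : ℝ := α / A with hK_def
  have hK : 0 < K := div_pos hα0 hA
  set G : ℝ → ℝ := fun t => a - b * t ^ (β - η) + α * c * t ^ (-η) with hG_def
  set F : ℝ → ℝ := fun t => K * (N / η * t ^ (η - α) - B / β * t ^ (β - α) - c * t ^ (-α))
    with hF_def
  -- fib agrees with F on (0, ∞)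
  have fib_eq : ∀ t : ℝ, 0 < t → fib α η β N A B c t = F t := by
    intro t ht
    have htα : (t : ℝ) ^ α ≠ 0 := (Real.rpow_pos_of_pos ht α).ne'
    simp only [fib, hF_def, hK_def, Real.rpow_sub ht, Real.rpow_neg ht.le]
    field_simp
  -- the polynomial identity relating the two descriptions of g
  have gG : ∀ t : ℝ, 0 < t → a * t ^ η - b * t ^ β + α * c = t ^ η * G t := by
    intro t ht
    have e1 : t ^ η * t ^ (β - η) = t ^ β := by
      rw [← rpow_split ht]; norm_num
    have e2 : t ^ η * t ^ (-η) = 1 := by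
      rw [← rpow_split ht]; norm_num
    simp only [hG_def]
    linear_combination b * e1 - α * c * e2
  -- derivative of fib on (0, ∞)
  have key : ∀ t : ℝ, 0 < t →
      HasDerivAt (fib α η β N A B c)
        (K * t ^ (-α - 1) * (a * t ^ η - b * t ^ β + α * c)) t := by
    intro t ht
    have hF : HasDerivAt F
        (K * (N / η * ((η - α) * t ^ (η - α - 1)) - B / β * ((β - α) * t ^ (β - α - 1))
          - c * ((-α) * t ^ (-α - 1)))) t := by
      exact ((((hd_rpow ht (η - α)).const_mul (N / η)).sub
        ((hd_rpow ht (β - α)).const_mul (B / β))).sub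
        ((hd_rpow ht (-α)).const_mul c)).const_mul K
    have hval : K * (N / η * ((η - α) * t ^ (η - α - 1)) - B / β * ((β - α) * t ^ (β - α - 1))
          - c * ((-α) * t ^ (-α - 1)))
        = K * t ^ (-α - 1) * (a * t ^ η - b * t ^ β + α * c) := by
      have e1 : t ^ (η - α - 1) = t ^ η * t ^ (-α - 1) := by
        rw [← rpow_split ht]; congr 1; ring
      have e2 : t ^ (β - α - 1) = t ^ β * t ^ (-α - 1) := by
        rw [← rpow_split ht]; congr 1; ring
      rw [e1, e2, ha_def, hb_def]
      field_simp
      ring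
    have hev : fib α η β N A B c =ᶠ[nhds t] F :=
      Filter.eventuallyEq_of_mem (isOpen_Ioi.mem_nhds ht) (fun s hs => fib_eq s hs)
    exact (hval ▸ hF).congr_of_eventuallyEq hev
  -- derivative of G
  have hG_deriv : ∀ t : ℝ, 0 < t →
      HasDerivAt G (-(b * ((β - η) * t ^ (β - η - 1))) + α * c * ((-η) * t ^ (-η - 1))) t := by
    intro t ht
    exact ((hasDerivAt_const t a).sub ((hd_rpow ht (β - η)).const_mul b)).add
      ((hd_rpow ht (-η)).const_mul (α * c)) |>.congr_deriv (by ring)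
  have hG_deriv_neg : ∀ t : ℝ, 0 < t → deriv G t < 0 := by
    intro t ht
    rw [(hG_deriv t ht).deriv]
    have p1 : 0 < b * ((β - η) * t ^ (β - η - 1)) :=
      mul_pos hb (mul_pos (sub_pos.2 h3) (Real.rpow_pos_of_pos ht _))
    have p2 : α * c * ((-η) * t ^ (-η - 1)) ≤ 0 := by
      apply mul_nonpos_of_nonneg_of_nonpos (mul_nonneg hα0.le hc)
      exact mul_nonpos_of_nonpos_of_nonneg (neg_nonpos.2 hη0.le) (Real.rpow_pos_of_pos ht _).le
    linarith
  have hG_cont : ∀ t : ℝ, 0 < t → ContinuousAt G t :=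
    fun t ht => (hG_deriv t ht).continuousAt
  have hG_anti : StrictAntiOn G (Set.Ioi 0) := by
    apply strictAntiOn_of_deriv_neg (convex_Ioi 0)
    · exact fun t ht => (hG_cont t ht).continuousWithinAt
    · intro t ht
      rw [interior_Ioi] at ht
      exact hG_deriv_neg t ht
  -- IVT: find the zero tm of G
  have hβη : (0:ℝ) < β - η := sub_pos.2 h3
  set t1 : ℝ := (a / (2 * b)) ^ (β - η)⁻¹ with ht1_def
  have ht1pos : 0 < t1 := Real.rpow_pos_of_pos (div_pos ha (by linarith)) _
  have hGt1 : 0 < G t1 := by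
    have e : t1 ^ (β - η) = a / (2 * b) :=
      Real.rpow_inv_rpow (le_of_lt (div_pos ha (by linarith))) hβη.ne'
    have h2' : 0 ≤ α * c * t1 ^ (-η) :=
      mul_nonneg (mul_nonneg hα0.le hc) (Real.rpow_pos_of_pos ht1pos _).le
    have : b * t1 ^ (β - η) = a / 2 := by
      rw [e]; field_simp
    simp only [hG_def]
    linarith
  set t2 : ℝ := max 1 (((a + α * c + 1) / b) ^ (β - η)⁻¹) with ht2_def
  have ht2pos : 0 < t2 := lt_of_lt_of_le one_pos (le_max_left _ _)
  have hGt2 : G t2 < 0 := by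
    have hr0 : (0:ℝ) ≤ (a + α * c + 1) / b :=
      div_nonneg (by positivity) hb.le
    have e : (((a + α * c + 1) / b) ^ (β - η)⁻¹) ^ (β - η) = (a + α * c + 1) / b :=
      Real.rpow_inv_rpow hr0 hβη.ne'
    have hle : ((a + α * c + 1) / b) ^ (β - η)⁻¹ ≤ t2 := le_max_right _ _
    have h21 : (1:ℝ) ≤ t2 := le_max_left _ _
    have hbig : (a + α * c + 1) / b ≤ t2 ^ (β - η) := by
      rw [← e]
      exact Real.rpow_le_rpow (Real.rpow_nonneg hr0 _) hle hβη.le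
    have hbig' : a + α * c + 1 ≤ b * t2 ^ (β - η) := by
      rw [div_le_iff₀ hb] at hbig; linarith [hbig]
    have hsmall : t2 ^ (-η) ≤ 1 :=
      Real.rpow_le_one_of_one_le_of_nonpos h21 (neg_nonpos.2 hη0.le)
    have hsmall' : α * c * t2 ^ (-η) ≤ α * c := by
      nlinarith [mul_nonneg hα0.le hc, (Real.rpow_pos_of_pos ht2pos (-η)).le]
    simp only [hG_def]
    linarith
  have ht12 : t1 ≤ t2 := by
    by_contra hcon
    push_neg at hcon
    have := hG_anti (Set.mem_Ioi.2 ht2pos) (Set.mem_Ioi.2 ht1pos) hcon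
    linarith
  obtain ⟨tm, htm_mem, hGtm⟩ : ∃ tm ∈ Set.Icc t1 t2, G tm = 0 := by
    have hsub : Set.Icc (G t2) (G t1) ⊆ G '' Set.Icc t1 t2 := by
      apply intermediate_value_Icc' ht12
      intro s hs
      exact (hG_cont s (lt_of_lt_of_le ht1pos hs.1)).continuousWithinAt
    obtain ⟨tm, htm, h0⟩ := hsub ⟨hGt2.le, hGt1.le⟩
    exact ⟨tm, htm, h0⟩
  have htm0 : 0 < tm := lt_of_lt_of_le ht1pos htm_mem.1
  -- basic sign facts about deriv fib
  have deriv_fib_eq : ∀ t : ℝ, 0 < t →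
      deriv (fib α η β N A B c) t = K * t ^ (-α - 1) * (t ^ η * G t) := by
    intro t ht
    rw [(key t ht).deriv, gG t ht]
  have deriv_fib_tm : deriv (fib α η β N A B c) tm = 0 := by
    rw [deriv_fib_eq tm htm0, hGtm]; ring
  -- uniqueness
  have uniq : ∀ t : ℝ, 0 < t → deriv (fib α η β N A B c) t = 0 → t = tm := by
    intro t ht h0
    rw [deriv_fib_eq t ht] at h0
    have hKt : K * t ^ (-α - 1) ≠ 0 := (mul_pos hK (Real.rpow_pos_of_pos ht _)).ne'
    have htη : t ^ η ≠ 0 := (Real.rpow_pos_of_pos ht η).ne'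
    have hGt0 : G t = 0 := by
      rcases mul_eq_zero.1 h0 with h | h
      · exact absurd h hKt
      · rcases mul_eq_zero.1 h with h' | h'
        · exact absurd h' htη
        · exact h'
    exact hG_anti.injOn (Set.mem_Ioi.2 ht) (Set.mem_Ioi.2 htm0) (hGt0.trans hGtm.symm)
  -- the relation a tm^η - b tm^β + α c = 0
  have hgtm : a * tm ^ η - b * tm ^ β + α * c = 0 := by
    rw [gG tm htm0, hGtm]; ring
  -- second derivative
  have second : deriv (deriv (fib α η β N A B c)) tm < 0 := by
    set D : ℝ → ℝ := fun t =>
      K * (a * t ^ (η - α - 1) - b * t ^ (β - α - 1) + α * c * t ^ (-α - 1)) with hD_def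
    have hDfib : deriv (fib α η β N A B c) =ᶠ[nhds tm] D := by
      apply Filter.eventuallyEq_of_mem (isOpen_Ioi.mem_nhds htm0)
      intro t ht
      rw [(key t (Set.mem_Ioi.1 ht)).deriv]
      have ht' : (0:ℝ) < t := ht
      have e1 : t ^ (η - α - 1) = t ^ η * t ^ (-α - 1) := by
        rw [← rpow_split ht']; congr 1; ring
      have e2 : t ^ (β - α - 1) = t ^ β * t ^ (-α - 1) := by
        rw [← rpow_split ht']; congr 1; ring
      simp only [hD_def]
      rw [e1, e2]; ring
    have hDderiv : HasDerivAt D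
        (K * (a * ((η - α - 1) * tm ^ (η - α - 1 - 1)) - b * ((β - α - 1) * tm ^ (β - α - 1 - 1))
          + α * c * ((-α - 1) * tm ^ (-α - 1 - 1)))) tm :=
      ((hd_rpow htm0 (η - α - 1)).const_mul a).sub
        ((hd_rpow htm0 (β - α - 1)).const_mul b) |>.add
        ((hd_rpow htm0 (-α - 1)).const_mul (α * c)) |>.const_mul K
    rw [hDfib.deriv_eq, hDderiv.deriv]
    -- now show the value is negative
    have e1 : tm ^ (η - α - 1 - 1) = tm ^ η * tm ^ (-α - 2) := by
      rw [← rpow_split htm0]; congr 1; ring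
    have e2 : tm ^ (β - α - 1 - 1) = tm ^ β * tm ^ (-α - 2) := by
      rw [← rpow_split htm0]; congr 1; ring
    have e3 : tm ^ (-α - 1 - 1) = tm ^ (-α - 2) := by congr 1; ring
    have hbracket : a * ((η - α - 1) * tm ^ (η - α - 1 - 1)) - b * ((β - α - 1) * tm ^ (β - α - 1 - 1))
          + α * c * ((-α - 1) * tm ^ (-α - 1 - 1))
        = tm ^ (-α - 2) * ((-α - 1) * (a * tm ^ η - b * tm ^ β + α * c)
            + (a * η * tm ^ η - b * β * tm ^ β)) := by
      rw [e1, e2, e3]; ring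
    have hηβ : a * η * tm ^ η - b * β * tm ^ β < 0 := by
      have h1' : a * tm ^ η ≤ b * tm ^ β := by nlinarith [mul_nonneg hα0.le hc]
      have h2' : 0 < b * tm ^ β := mul_pos hb (Real.rpow_pos_of_pos htm0 _)
      have h3' : 0 < a * tm ^ η := mul_pos ha (Real.rpow_pos_of_pos htm0 _)
      nlinarith
    have hpos2 : 0 < tm ^ (-α - 2) := Real.rpow_pos_of_pos htm0 _
    have hstep : a * ((η - α - 1) * tm ^ (η - α - 1 - 1)) - b * ((β - α - 1) * tm ^ (β - α - 1 - 1))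
          + α * c * ((-α - 1) * tm ^ (-α - 1 - 1)) < 0 := by
      rw [hbracket, hgtm]
      apply mul_neg_of_pos_of_neg hpos2
      linarith
    exact mul_neg_of_pos_of_neg hK hstep
  -- strict global maximum
  have hmax : ∀ s : ℝ, 0 < s → s ≠ tm →
      fib α η β N A B c s < fib α η β N A B c tm := by
    intro s hs hne
    have fib_contOn : ∀ u v : ℝ, 0 < u → ContinuousOn (fib α η β N A B c) (Set.Icc u v) := by
      intro u v hu
      intro t ht
      exact ((key t (lt_of_lt_of_le hu ht.1)).continuousAt).continuousWithinAt
    rcases lt_or_gt_of_ne hne with hlt | hgt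
    · -- s < tm : fib strictly increasing on [s, tm]
      have hmono : StrictMonoOn (fib α η β N A B c) (Set.Icc s tm) := by
        apply strictMonoOn_of_deriv_pos (convex_Icc s tm) (fib_contOn s tm hs)
        intro t ht
        rw [interior_Icc] at ht
        have ht0 : 0 < t := lt_trans hs ht.1
        rw [deriv_fib_eq t ht0]
        have hGpos : 0 < G t := by
          have := hG_anti (Set.mem_Ioi.2 ht0) (Set.mem_Ioi.2 htm0) ht.2
          rw [hGtm] at this; exact this
        exact mul_pos (mul_pos hK (Real.rpow_pos_of_pos ht0 _))
          (mul_pos (Real.rpow_pos_of_pos ht0 _) hGpos)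
      exact hmono (Set.mem_Icc.2 ⟨le_refl s, hlt.le⟩) (Set.mem_Icc.2 ⟨hlt.le, le_refl tm⟩) hlt
    · -- tm < s : fib strictly decreasing on [tm, s]
      have hanti : StrictAntiOn (fib α η β N A B c) (Set.Icc tm s) := by
        apply strictAntiOn_of_deriv_neg (convex_Icc tm s) (fib_contOn tm s htm0)
        intro t ht
        rw [interior_Icc] at ht
        have ht0 : 0 < t := lt_trans htm0 ht.1
        rw [deriv_fib_eq t ht0]
        have hGneg : G t < 0 := by
          have := hG_anti (Set.mem_Ioi.2 htm0) (Set.mem_Ioi.2 ht0) ht.1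
          rw [hGtm] at this; exact this
        have : t ^ η * G t < 0 :=
          mul_neg_of_pos_of_neg (Real.rpow_pos_of_pos ht0 _) hGneg
        exact mul_neg_of_pos_of_neg (mul_pos hK (Real.rpow_pos_of_pos ht0 _)) this
      exact hanti (Set.mem_Icc.2 ⟨le_refl tm, hgt.le⟩) (Set.mem_Icc.2 ⟨hgt.le, le_refl s⟩) hgt
  exact ⟨tm, htm0, deriv_fib_tm, uniq, second, hmax⟩
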